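/- Let G be a finite simple undirected graph and e = {a,b} a bridge of G (deleting e disconnects a from b). Then for every vertex v in the connected component of G containing a (equivalently b), c_{G−e}(v) < c_G(v), where c_H(v) := P(H) − P(H∖{v}). -/

import Mathlib

/-- Total pairwise connectivity: the number of unordered pairs of distinct vertices
joined by a path. -/
noncomputable def pairConn {V : Type*} [Fintype V] (G : SimpleGraph V) : ℕ :=
  {p : Sym2 V | ¬ p.IsDiag ∧
    p ∈ Sym2.fromRel (r := G.Reachable) ⟨fun _ _ h => h.symm⟩}.ncard

/-- Deleting a set of vertices from a simple graph (modelled by isolating them,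
which leaves the pairwise connectivity among the remaining vertices unchanged and
contributes no connected pairs). -/
def SimpleGraph.vdel {V : Type*} (G : SimpleGraph V) (S : Set V) : SimpleGraph V where
  Adj a b := G.Adj a b ∧ a ∉ S ∧ b ∉ S
  symm := ⟨fun a b ⟨h, ha, hb⟩ => ⟨h.symm, hb, ha⟩⟩
  loopless := ⟨fun a ⟨h, _, _⟩ => G.irrefl h⟩

/-- Pairwise connectivity score of a vertex: `c(v) = P(G) - P(G \ {v})`. -/
noncomputable def cscore {V : Type*} [Fintype V] (G : SimpleGraph V) (v : V) : ℕ :=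
  pairConn G - pairConn (G.vdel {v})

open SimpleGraph

/-- The set of connected nondiagonal pairs. -/
def connSet {V : Type*} (G : SimpleGraph V) : Set (Sym2 V) :=
  {p : Sym2 V | ¬ p.IsDiag ∧
    p ∈ Sym2.fromRel (r := G.Reachable) ⟨fun _ _ h => h.symm⟩}

lemma pairConn_eq {V : Type*} [Fintype V] (G : SimpleGraph V) :
    pairConn G = (connSet G).ncard := rfl

lemma mem_connSet {V : Type*} {G : SimpleGraph V} {x y : V} :
    s(x, y) ∈ connSet G ↔ x ≠ y ∧ G.Reachable x y := by
  simp [connSet, Sym2.fromRel_prop, Sym2.mk_isDiag_iff]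

lemma vdel_le {V : Type*} (G : SimpleGraph V) (S : Set V) : G.vdel S ≤ G :=
  fun _ _ h => h.1

lemma not_reachable_vdel {V : Type*} (G : SimpleGraph V) (v w : V) (h : v ≠ w) :
    ¬ (G.vdel {v}).Reachable v w := by
  rintro ⟨W⟩
  cases W with
  | nil => exact h rfl
  | cons hadj _ => exact hadj.2.1 rfl

lemma walk_delete_edges_cases {V : Type*} (H : SimpleGraph V) (a b : V) {x y : V}
    (W : H.Walk x y) :
    (H.deleteEdges {s(a, b)}).Reachable x y ∨
    ((H.deleteEdges {s(a, b)}).Reachable x a ∧ (H.deleteEdges {s(a, b)}).Reachable b y) ∨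
    ((H.deleteEdges {s(a, b)}).Reachable x b ∧ (H.deleteEdges {s(a, b)}).Reachable a y) := by
  induction W with
  | nil => exact Or.inl (Reachable.refl _)
  | @cons u z w h p ih =>
    by_cases he : s(u, z) = s(a, b)
    · rw [Sym2.eq_iff] at he
      rcases he with ⟨hua, hzb⟩ | ⟨hub, hza⟩
      · subst hua; subst hzb
        rcases ih with h1 | ⟨h1, h2⟩ | ⟨h1, h2⟩
        · exact Or.inr (Or.inl ⟨Reachable.refl _, h1⟩)
        · exact Or.inr (Or.inl ⟨Reachable.refl _, h2⟩)
        · exact Or.inl h2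
      · subst hub; subst hza
        rcases ih with h1 | ⟨h1, h2⟩ | ⟨h1, h2⟩
        · exact Or.inr (Or.inr ⟨Reachable.refl _, h1⟩)
        · exact Or.inl h2
        · exact Or.inr (Or.inr ⟨Reachable.refl _, h2⟩)
    · have hadj' : (H.deleteEdges {s(a, b)}).Adj u z := by
        rw [SimpleGraph.deleteEdges_adj]
        exact ⟨h, by simpa using he⟩
      rcases ih with h1 | ⟨h1, h2⟩ | ⟨h1, h2⟩
      · exact Or.inl (hadj'.reachable.trans h1)
      · exact Or.inr (Or.inl ⟨hadj'.reachable.trans h1, h2⟩)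
      · exact Or.inr (Or.inr ⟨hadj'.reachable.trans h1, h2⟩)

lemma vdel_deleteEdges_comm {V : Type*} (G : SimpleGraph V) (S : Set V) (E : Set (Sym2 V)) :
    (G.vdel S).deleteEdges E = (G.deleteEdges E).vdel S := by
  ext u w
  simp only [SimpleGraph.deleteEdges_adj, SimpleGraph.vdel]
  tauto

lemma reachable_delete_vdel {V : Type*} (G : SimpleGraph V) (a b v : V) {x y : V}
    (hbridge : ¬ (G.deleteEdges {s(a, b)}).Reachable a b)
    (h1 : (G.deleteEdges {s(a, b)}).Reachable x y)
    (h2 : (G.vdel {v}).Reachable x y) :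
    ((G.deleteEdges {s(a, b)}).vdel {v}).Reachable x y := by
  have key := walk_delete_edges_cases (G.vdel {v}) a b h2.some
  rw [vdel_deleteEdges_comm] at key
  have hle : (G.deleteEdges {s(a, b)}).vdel {v} ≤ G.deleteEdges {s(a, b)} := vdel_le _ _
  rcases key with h | ⟨hxa, hby⟩ | ⟨hxb, hay⟩
  · exact h
  · exact absurd (((hxa.mono hle).symm.trans h1).trans (hby.mono hle).symm) hbridge
  · exact absurd ((((hxb.mono hle).symm.trans h1).trans (hay.mono hle).symm).symm) hbridge

theorem cscore_strict_decrease_of_bridge {V : Type*} [Fintype V]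
    (G : SimpleGraph V) (a b : V) (hab : G.Adj a b)
    (hbridge : ¬ (G.deleteEdges {s(a, b)}).Reachable a b) :
    ∀ v : V, G.Reachable v a →
      cscore (G.deleteEdges {s(a, b)}) v < cscore G v := by
  intro v hva
  set G' := G.deleteEdges {s(a, b)} with hG'
  have hsub : ∀ H : SimpleGraph V, connSet (H.vdel {v}) ⊆ connSet H := by
    intro H p hp
    induction p using Sym2.ind with
    | _ x y =>
      rw [mem_connSet] at hp ⊢
      exact ⟨hp.1, hp.2.mono (vdel_le H {v})⟩
  have hcs : ∀ H : SimpleGraph V,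
      cscore H v = (connSet H \ connSet (H.vdel {v})).ncard := by
    intro H
    rw [cscore, pairConn_eq, pairConn_eq,
      Set.ncard_diff (hsub H) (Set.toFinite _)]
  rw [hcs, hcs]
  apply Set.ncard_lt_ncard _ (Set.toFinite _)
  constructor
  · -- subset
    intro p hp
    induction p using Sym2.ind with
    | _ x y =>
      obtain ⟨hp1, hp2⟩ := hp
      rw [mem_connSet] at hp1
      refine ⟨mem_connSet.mpr ⟨hp1.1, hp1.2.mono (G.deleteEdges_le _)⟩, ?_⟩
      intro hmem
      rw [mem_connSet] at hmem
      exact hp2 (mem_connSet.mpr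
        ⟨hp1.1, reachable_delete_vdel G a b v hbridge hp1.2 hmem.2⟩)
  · -- strictness: witness pair
    intro hss
    obtain ⟨w, hvw, hreachG, hnotG'⟩ :
        ∃ w : V, v ≠ w ∧ G.Reachable v w ∧ ¬ G'.Reachable v w := by
      by_cases hva' : G'.Reachable v a
      · refine ⟨b, ?_, hva.trans hab.reachable, ?_⟩
        · rintro rfl; exact hbridge hva'.symm
        · intro hvb; exact hbridge (hva'.symm.trans hvb)
      · refine ⟨a, ?_, hva, hva'⟩
        rintro rfl; exact hva' (Reachable.refl v)
    have hmemD : s(v, w) ∈ connSet G \ connSet (G.vdel {v}) := by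
      refine ⟨mem_connSet.mpr ⟨hvw, hreachG⟩, ?_⟩
      intro hmem
      exact not_reachable_vdel G v w hvw (mem_connSet.mp hmem).2
    have := hss hmemD
    exact hnotG' (mem_connSet.mp this.1).2
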